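/- Under the same sampling setup, the EDMD estimator K̂^(m) = C_xx^+ C_xy converges almost surely to P as m → ∞, and the forward-backward estimator F̂^(m) = C_xx^+ C_xy C_yy^+ C_yx converges almost surely to Q = P D_ν^{-1} P^⊤, provided all column sums ν_j of P are positive. -/

import Mathlib

open MeasureTheory ProbabilityTheory Filter Matrix

/-- `B` is the Moore–Penrose pseudoinverse of `A`. -/
def IsMoorePenroseInverse {n : ℕ} (A B : Matrix (Fin n) (Fin n) ℝ) : Prop :=
  A * B * A = A ∧ B * A * B = B ∧ (A * B)ᵀ = A * B ∧ (B * A)ᵀ = B * A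

lemma pinv_tendsto {n : ℕ} {A B : ℕ → Matrix (Fin n) (Fin n) ℝ} {L : Matrix (Fin n) (Fin n) ℝ}
    (hL : IsUnit L.det) (hA : Tendsto A atTop (nhds L))
    (hB : ∀ m, (A m) * (B m) * (A m) = A m) :
    Tendsto B atTop (nhds L⁻¹) := by
  have hdet : Tendsto (fun m => (A m).det) atTop (nhds L.det) :=
    (continuous_id.matrix_det.tendsto L).comp hA
  have hne : L.det ≠ 0 := hL.ne_zero
  have hev : ∀ᶠ m in atTop, (A m).det ≠ 0 :=
    hdet (isOpen_ne.mem_nhds hne)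
  have hinv : Tendsto (fun m => (A m)⁻¹) atTop (nhds L⁻¹) := by
    have := (continuousAt_matrix_inv L ?_).tendsto.comp hA
    · exact this
    · have : (Ring.inverse : ℝ → ℝ) = fun x => x⁻¹ := by
        funext x; exact Ring.inverse_eq_inv x
      rw [this]
      exact continuousAt_inv₀ hne
  refine hinv.congr' ?_
  filter_upwards [hev] with m hm
  have hU : IsUnit (A m).det := isUnit_iff_ne_zero.mpr hm
  have h1 := hB m
  have : (A m)⁻¹ * (A m * B m * A m) * (A m)⁻¹ = B m := by
    rw [show A m * B m * A m = A m * (B m * A m) by rw [Matrix.mul_assoc],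
      ← Matrix.mul_assoc, Matrix.nonsing_inv_mul _ hU, one_mul, Matrix.mul_assoc,
      Matrix.mul_nonsing_inv _ hU, mul_one]
  rw [← this, h1, Matrix.nonsing_inv_mul _ hU, one_mul]

lemma slln_pair {Ω : Type*} [MeasurableSpace Ω] {μ : Measure Ω} [IsProbabilityMeasure μ]
    {n : ℕ} {W : ℕ → Ω → Fin n × Fin n}
    (hmeas : ∀ k, Measurable (W k))
    (hindep : iIndepFun W μ)
    (hident : ∀ k, IdentDistrib (W k) (W 0) μ μ)
    (f : Fin n × Fin n → ℝ) :
    ∀ᵐ ω ∂μ, Tendsto (fun m : ℕ => (m:ℝ)⁻¹ * ∑ k ∈ Finset.range m, f (W k ω)) atTop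
      (nhds (∫ ω, f (W 0 ω) ∂μ)) := by
  have hf : Measurable f := measurable_of_countable f
  set Z : ℕ → Ω → ℝ := fun k ω => f (W k ω) with hZ
  have hZmeas : ∀ k, Measurable (Z k) := fun k => hf.comp (hmeas k)
  have hint : Integrable (Z 0) μ := by
    refine (integrable_const (∑ p : Fin n × Fin n, |f p|)).mono'
      (hZmeas 0).aestronglyMeasurable (ae_of_all _ fun ω => ?_)
    simp only [Z, Real.norm_eq_abs]
    exact Finset.single_le_sum (f := fun p => |f p|) (fun p _ => abs_nonneg _)
      (Finset.mem_univ _)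
  have hpind : Pairwise (Function.onFun (IndepFun · · μ) Z) := fun i j hij =>
    (hindep.indepFun hij).comp hf hf
  have hid : ∀ k, IdentDistrib (Z k) (Z 0) μ μ := fun k => (hident k).comp hf
  have := strong_law_ae Z hint hpind hid
  filter_upwards [this] with ω hω
  simpa [smul_eq_mul] using hω

lemma tendsto_matrix_mul {n : ℕ} {A B : ℕ → Matrix (Fin n) (Fin n) ℝ}
    {LA LB : Matrix (Fin n) (Fin n) ℝ}
    (hA : Tendsto A atTop (nhds LA)) (hB : Tendsto B atTop (nhds LB)) :
    Tendsto (fun m => A m * B m) atTop (nhds (LA * LB)) :=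
  hA.mul hB

theorem edmd_estimators_convergence {n : ℕ} (hn : 0 < n)
    (P : Matrix (Fin n) (Fin n) ℝ)
    (hnonneg : ∀ i j, 0 ≤ P i j) (hrow : ∀ i, ∑ j, P i j = 1)
    (ν : Fin n → ℝ) (hν : ∀ j, ν j = ∑ ℓ, P ℓ j) (hνpos : ∀ j, 0 < ν j)
    (Q : Matrix (Fin n) (Fin n) ℝ)
    (hQ : Q = P * Matrix.diagonal (fun j => (ν j)⁻¹) * Pᵀ)
    {Ω : Type*} [MeasurableSpace Ω] (μ : Measure Ω) [IsProbabilityMeasure μ]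
    (X Y : ℕ → Ω → Fin n)
    (hmeas : ∀ k, Measurable fun ω => (X k ω, Y k ω))
    (hindep : iIndepFun (fun k ω => (X k ω, Y k ω)) μ)
    (hjoint : ∀ k (i j : Fin n),
      μ {ω | X k ω = i ∧ Y k ω = j} = ENNReal.ofReal (P i j / n))
    (Cxx Cxy Cyx Cyy : ℕ → Ω → Matrix (Fin n) (Fin n) ℝ)
    (hCxx : ∀ m ω i j, Cxx m ω i j = (m : ℝ)⁻¹ * ∑ k ∈ Finset.range m,
      (if X k ω = i then (1 : ℝ) else 0) * (if X k ω = j then (1 : ℝ) else 0))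
    (hCxy : ∀ m ω i j, Cxy m ω i j = (m : ℝ)⁻¹ * ∑ k ∈ Finset.range m,
      (if X k ω = i then (1 : ℝ) else 0) * (if Y k ω = j then (1 : ℝ) else 0))
    (hCyx : ∀ m ω, Cyx m ω = (Cxy m ω)ᵀ)
    (hCyy : ∀ m ω i j, Cyy m ω i j = (m : ℝ)⁻¹ * ∑ k ∈ Finset.range m,
      (if Y k ω = i then (1 : ℝ) else 0) * (if Y k ω = j then (1 : ℝ) else 0))
    (Kxx Kyy : ℕ → Ω → Matrix (Fin n) (Fin n) ℝ)
    (hKxx : ∀ m ω, IsMoorePenroseInverse (Cxx m ω) (Kxx m ω))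
    (hKyy : ∀ m ω, IsMoorePenroseInverse (Cyy m ω) (Kyy m ω)) :
    ∀ᵐ ω ∂μ,
      Tendsto (fun m : ℕ => Kxx m ω * Cxy m ω) atTop (nhds P) ∧
      Tendsto (fun m : ℕ => Kxx m ω * Cxy m ω * (Kyy m ω * Cyx m ω)) atTop (nhds Q) := by
  have hn0 : (n : ℝ) ≠ 0 := Nat.cast_ne_zero.mpr hn.ne'
  -- measurability of joint events
  have hms : ∀ k (i j : Fin n), MeasurableSet {ω | X k ω = i ∧ Y k ω = j} := by
    intro k i j
    have : {ω | X k ω = i ∧ Y k ω = j} = (fun ω => (X k ω, Y k ω)) ⁻¹' {(i, j)} := by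
      ext ω; simp [Prod.ext_iff]
    rw [this]; exact hmeas k (measurableSet_singleton _)
  -- identical distribution
  have hident : ∀ k, IdentDistrib (fun ω => (X k ω, Y k ω)) (fun ω => (X 0 ω, Y 0 ω)) μ μ := by
    intro k
    refine ⟨(hmeas k).aemeasurable, (hmeas 0).aemeasurable, ?_⟩
    refine MeasureTheory.Measure.ext_of_singleton fun p => ?_
    obtain ⟨i, j⟩ := p
    rw [Measure.map_apply (hmeas k) (measurableSet_singleton _),
        Measure.map_apply (hmeas 0) (measurableSet_singleton _)]
    have hp : ∀ l, (fun ω => (X l ω, Y l ω)) ⁻¹' {(i, j)} = {ω | X l ω = i ∧ Y l ω = j} := by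
      intro l; ext ω; simp [Prod.ext_iff]
    rw [hp k, hp 0, hjoint k, hjoint 0]
  -- marginals
  have hmuX : ∀ i, μ {ω | X 0 ω = i} = ENNReal.ofReal ((n : ℝ)⁻¹) := by
    intro i
    have hU : {ω | X 0 ω = i} = ⋃ j, {ω | X 0 ω = i ∧ Y 0 ω = j} := by
      ext ω
      simp only [Set.mem_setOf_eq, Set.mem_iUnion]
      exact ⟨fun h => ⟨Y 0 ω, h, rfl⟩, fun ⟨j, hj, _⟩ => hj⟩
    have hd : Pairwise (Function.onFun Disjoint fun j => {ω | X 0 ω = i ∧ Y 0 ω = j}) := by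
      intro a b hab
      refine Set.disjoint_left.mpr fun ω h1 h2 => hab ?_
      rw [← h1.2, h2.2]
    rw [hU, measure_iUnion hd (fun j => hms 0 i j), tsum_fintype]
    simp_rw [hjoint 0 i]
    rw [← ENNReal.ofReal_sum_of_nonneg (fun j _ => div_nonneg (hnonneg i j) (Nat.cast_nonneg n))]
    congr 1
    rw [← Finset.sum_div, hrow, one_div]
  have hmuY : ∀ j, μ {ω | Y 0 ω = j} = ENNReal.ofReal (ν j / n) := by
    intro j
    have hU : {ω | Y 0 ω = j} = ⋃ i, {ω | X 0 ω = i ∧ Y 0 ω = j} := by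
      ext ω
      simp only [Set.mem_setOf_eq, Set.mem_iUnion]
      exact ⟨fun h => ⟨X 0 ω, rfl, h⟩, fun ⟨i, _, hj⟩ => hj⟩
    have hd : Pairwise (Function.onFun Disjoint fun i => {ω | X 0 ω = i ∧ Y 0 ω = j}) := by
      intro a b hab
      refine Set.disjoint_left.mpr fun ω h1 h2 => hab ?_
      rw [← h1.1, h2.1]
    rw [hU, measure_iUnion hd (fun i => hms 0 i j), tsum_fintype]
    simp_rw [hjoint 0]
    rw [← ENNReal.ofReal_sum_of_nonneg (fun i _ => div_nonneg (hnonneg i j) (Nat.cast_nonneg n))]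
    congr 1
    rw [← Finset.sum_div, ← hν j]
  have hmsX : ∀ i, MeasurableSet {ω | X 0 ω = i} := by
    intro i
    have : {ω | X 0 ω = i} = ⋃ j, {ω | X 0 ω = i ∧ Y 0 ω = j} := by
      ext ω
      simp only [Set.mem_setOf_eq, Set.mem_iUnion]
      exact ⟨fun h => ⟨Y 0 ω, h, rfl⟩, fun ⟨j, hj, _⟩ => hj⟩
    rw [this]; exact MeasurableSet.iUnion fun j => hms 0 i j
  have hmsY : ∀ j, MeasurableSet {ω | Y 0 ω = j} := by
    intro j
    have : {ω | Y 0 ω = j} = ⋃ i, {ω | X 0 ω = i ∧ Y 0 ω = j} := by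
      ext ω
      simp only [Set.mem_setOf_eq, Set.mem_iUnion]
      exact ⟨fun h => ⟨X 0 ω, rfl, h⟩, fun ⟨i, _, hj⟩ => hj⟩
    rw [this]; exact MeasurableSet.iUnion fun i => hms 0 i j
  -- limit matrices
  set Lxx : Matrix (Fin n) (Fin n) ℝ := Matrix.diagonal (fun _ => (n : ℝ)⁻¹) with hLxx
  set Lxy : Matrix (Fin n) (Fin n) ℝ := Matrix.of (fun i j => P i j / n) with hLxy
  set Lyy : Matrix (Fin n) (Fin n) ℝ := Matrix.diagonal (fun j => ν j / n) with hLyy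
  -- integral computations
  have Ixx : ∀ i j : Fin n,
      (∫ ω, (if X 0 ω = i then (1:ℝ) else 0) * (if X 0 ω = j then (1:ℝ) else 0) ∂μ)
        = Lxx i j := by
    intro i j
    by_cases hij : i = j
    · subst hij
      have he : (fun ω => (if X 0 ω = i then (1:ℝ) else 0) * (if X 0 ω = i then (1:ℝ) else 0))
          = Set.indicator {ω | X 0 ω = i} 1 := by
        funext ω; by_cases h : X 0 ω = i <;> simp [Set.indicator_apply, h]
      rw [he, integral_indicator_one (hmsX i), measureReal_def, hmuX i,
        ENNReal.toReal_ofReal (by positivity)]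
      simp [Lxx, Matrix.diagonal_apply_eq]
    · have he : (fun ω => (if X 0 ω = i then (1:ℝ) else 0) * (if X 0 ω = j then (1:ℝ) else 0))
          = fun _ => (0:ℝ) := by
        funext ω
        by_cases h : X 0 ω = i
        · have : X 0 ω ≠ j := by rw [h]; exact hij
          simp [h, this, hij]
        · simp [h]
      rw [he, integral_zero]
      simp [Lxx, Matrix.diagonal_apply_ne _ hij]
  have Ixy : ∀ i j : Fin n,
      (∫ ω, (if X 0 ω = i then (1:ℝ) else 0) * (if Y 0 ω = j then (1:ℝ) else 0) ∂μ)
        = Lxy i j := by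
    intro i j
    have he : (fun ω => (if X 0 ω = i then (1:ℝ) else 0) * (if Y 0 ω = j then (1:ℝ) else 0))
        = Set.indicator {ω | X 0 ω = i ∧ Y 0 ω = j} 1 := by
      funext ω
      by_cases h1 : X 0 ω = i <;> by_cases h2 : Y 0 ω = j <;>
        simp [Set.indicator_apply, h1, h2]
    rw [he, integral_indicator_one (hms 0 i j), measureReal_def, hjoint 0 i j,
      ENNReal.toReal_ofReal (div_nonneg (hnonneg i j) (Nat.cast_nonneg n))]
    rfl
  have Iyy : ∀ i j : Fin n,
      (∫ ω, (if Y 0 ω = i then (1:ℝ) else 0) * (if Y 0 ω = j then (1:ℝ) else 0) ∂μ)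
        = Lyy i j := by
    intro i j
    by_cases hij : i = j
    · subst hij
      have he : (fun ω => (if Y 0 ω = i then (1:ℝ) else 0) * (if Y 0 ω = i then (1:ℝ) else 0))
          = Set.indicator {ω | Y 0 ω = i} 1 := by
        funext ω; by_cases h : Y 0 ω = i <;> simp [Set.indicator_apply, h]
      rw [he, integral_indicator_one (hmsY i), measureReal_def, hmuY i,
        ENNReal.toReal_ofReal (div_nonneg (hνpos i).le (Nat.cast_nonneg n))]
      simp [Lyy, Matrix.diagonal_apply_eq]
    · have he : (fun ω => (if Y 0 ω = i then (1:ℝ) else 0) * (if Y 0 ω = j then (1:ℝ) else 0))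
          = fun _ => (0:ℝ) := by
        funext ω
        by_cases h : Y 0 ω = i
        · have : Y 0 ω ≠ j := by rw [h]; exact hij
          simp [h, this, hij]
        · simp [h]
      rw [he, integral_zero]
      simp [Lyy, Matrix.diagonal_apply_ne _ hij]
  -- per-entry a.s. convergence
  have h1 : ∀ i j : Fin n, ∀ᵐ ω ∂μ,
      Tendsto (fun m => Cxx m ω i j) atTop (nhds (Lxx i j)) := by
    intro i j
    have := slln_pair (μ := μ) (W := fun k ω => (X k ω, Y k ω)) hmeas hindep hident
      (fun p => (if p.1 = i then (1:ℝ) else 0) * (if p.1 = j then (1:ℝ) else 0))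
    filter_upwards [this] with ω hω
    have := hω.congr (fun m => (hCxx m ω i j).symm)
    rwa [Ixx i j] at this
  have h2 : ∀ i j : Fin n, ∀ᵐ ω ∂μ,
      Tendsto (fun m => Cxy m ω i j) atTop (nhds (Lxy i j)) := by
    intro i j
    have := slln_pair (μ := μ) (W := fun k ω => (X k ω, Y k ω)) hmeas hindep hident
      (fun p => (if p.1 = i then (1:ℝ) else 0) * (if p.2 = j then (1:ℝ) else 0))
    filter_upwards [this] with ω hω
    have := hω.congr (fun m => (hCxy m ω i j).symm)
    rwa [Ixy i j] at this
  have h3 : ∀ i j : Fin n, ∀ᵐ ω ∂μ,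
      Tendsto (fun m => Cyy m ω i j) atTop (nhds (Lyy i j)) := by
    intro i j
    have := slln_pair (μ := μ) (W := fun k ω => (X k ω, Y k ω)) hmeas hindep hident
      (fun p => (if p.2 = i then (1:ℝ) else 0) * (if p.2 = j then (1:ℝ) else 0))
    filter_upwards [this] with ω hω
    have := hω.congr (fun m => (hCyy m ω i j).symm)
    rwa [Iyy i j] at this
  have hall : ∀ᵐ ω ∂μ, ∀ i j : Fin n,
      Tendsto (fun m => Cxx m ω i j) atTop (nhds (Lxx i j)) ∧
      Tendsto (fun m => Cxy m ω i j) atTop (nhds (Lxy i j)) ∧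
      Tendsto (fun m => Cyy m ω i j) atTop (nhds (Lyy i j)) := by
    rw [ae_all_iff]
    intro i
    rw [ae_all_iff]
    intro j
    exact ((h1 i j).and ((h2 i j).and (h3 i j)))
  -- invertibility of limits
  have hdetLxx : IsUnit Lxx.det := by
    rw [hLxx, Matrix.det_diagonal, Finset.prod_const]
    exact isUnit_iff_ne_zero.mpr (pow_ne_zero _ (inv_ne_zero hn0))
  have hdetLyy : IsUnit Lyy.det := by
    rw [hLyy, Matrix.det_diagonal]
    exact isUnit_iff_ne_zero.mpr (Finset.prod_ne_zero_iff.mpr fun j _ =>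
      div_ne_zero (hνpos j).ne' hn0)
  have hLxxinv : Lxx⁻¹ = Matrix.diagonal (fun _ => (n : ℝ)) := by
    apply Matrix.inv_eq_right_inv
    rw [hLxx, Matrix.diagonal_mul_diagonal]
    convert Matrix.diagonal_one using 2
    funext _
    exact inv_mul_cancel₀ hn0
  have hLyyinv : Lyy⁻¹ = Matrix.diagonal (fun j => (n : ℝ) / ν j) := by
    apply Matrix.inv_eq_right_inv
    rw [hLyy, Matrix.diagonal_mul_diagonal]
    convert Matrix.diagonal_one using 2
    funext j
    rw [div_mul_div_comm, mul_comm (ν j)]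
    exact div_self (mul_ne_zero hn0 (hνpos j).ne')
  -- limit products
  have hK : Lxx⁻¹ * Lxy = P := by
    rw [hLxxinv]
    ext i j
    rw [Matrix.diagonal_mul]
    show (n : ℝ) * (P i j / n) = P i j
    field_simp
  have hF : Lxx⁻¹ * Lxy * (Lyy⁻¹ * Lxyᵀ) = Q := by
    rw [hK, hLyyinv, hQ, Matrix.mul_assoc]
    congr 1
    ext i j
    rw [Matrix.diagonal_mul, Matrix.diagonal_mul]
    show (n : ℝ) / ν i * (P j i / n) = (ν i)⁻¹ * P j i
    rw [div_mul_div_comm, mul_comm (ν i) ((n:ℝ)), mul_div_mul_left _ _ hn0, div_eq_inv_mul]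
  -- conclusion
  filter_upwards [hall] with ω hω
  have hTxx : Tendsto (fun m => Cxx m ω) atTop (nhds Lxx) :=
    tendsto_pi_nhds.2 fun i => tendsto_pi_nhds.2 fun j => (hω i j).1
  have hTxy : Tendsto (fun m => Cxy m ω) atTop (nhds Lxy) :=
    tendsto_pi_nhds.2 fun i => tendsto_pi_nhds.2 fun j => (hω i j).2.1
  have hTyy : Tendsto (fun m => Cyy m ω) atTop (nhds Lyy) :=
    tendsto_pi_nhds.2 fun i => tendsto_pi_nhds.2 fun j => (hω i j).2.2
  have hTyx : Tendsto (fun m => Cyx m ω) atTop (nhds Lxyᵀ) := by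
    refine tendsto_pi_nhds.2 fun i => tendsto_pi_nhds.2 fun j => ?_
    have : ∀ m, Cyx m ω i j = Cxy m ω j i := fun m => by rw [hCyx m ω]; rfl
    exact (((hω j i).2.1).congr fun m => (this m).symm)
  have hKxxT : Tendsto (fun m => Kxx m ω) atTop (nhds Lxx⁻¹) :=
    pinv_tendsto hdetLxx hTxx (fun m => (hKxx m ω).1)
  have hKyyT : Tendsto (fun m => Kyy m ω) atTop (nhds Lyy⁻¹) :=
    pinv_tendsto hdetLyy hTyy (fun m => (hKyy m ω).1)
  have hKC : Tendsto (fun m => Kxx m ω * Cxy m ω) atTop (nhds (Lxx⁻¹ * Lxy)) :=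
    tendsto_matrix_mul hKxxT hTxy
  constructor
  · rwa [hK] at hKC
  · have := tendsto_matrix_mul hKC (tendsto_matrix_mul hKyyT hTyx)
    rwa [hF] at this
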